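/- Let A be a commutative ring, p a prime number and d ∈ A. Assume that p and d are nonzerodivisors on A, that A/dA is p-torsion-free, and that A is classically p-adically complete. Let C := lim_n A[1/d]/p^n A[1/d] be the p-adic completion of A[1/d]. Then the natural square formed by A → A[1/p], A → A[1/d] → C, and the induced maps A[1/p] → C[1/p] and C → C[1/p] is Cartesian: the induced ring homomorphism A → A[1/p] ×_{C[1/p]} C is bijective. Equivalently, A[1/p] ∩ (A[1/d])^∧_p = A. -/

import Mathlib

/-- The p-adic completion `C = (A[1/d])^∧_p = lim_n A[1/d]/pⁿA[1/d]` of the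
localization `A[1/d]`. -/
noncomputable abbrev PAdicCompletionOfAway (A : Type*) [CommRing A] (p : ℕ) (d : A) : Type _ :=
  AdicCompletion (Ideal.span {(p : Localization.Away d)}) (Localization.Away d)

section helpers

variable {A : Type*} [CommRing A] (p : ℕ) (d : A)

/-- p^n x ∈ (d) → x ∈ (d) -/
lemma aux_pow_tf (htf : ∀ x : A, (p : A) * x ∈ Ideal.span {d} → x ∈ Ideal.span {d}) :
    ∀ n (x : A), (p : A) ^ n * x ∈ Ideal.span {d} → x ∈ Ideal.span {d} := by
  intro n
  induction n with
  | zero => intro x hx; simpa using hx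
  | succ n ih =>
    intro x hx
    rw [pow_succ', mul_assoc] at hx
    exact ih x (htf _ hx)

lemma aux_d_cancel (hdA : d ∈ nonZeroDivisors A)
    (htf : ∀ x : A, (p : A) * x ∈ Ideal.span {d} → x ∈ Ideal.span {d}) :
    ∀ (n : ℕ) (a : A), d * a ∈ Ideal.span {(p : A) ^ n} → a ∈ Ideal.span {(p : A) ^ n} := by
  intro n a ha
  rw [Ideal.mem_span_singleton] at ha ⊢
  obtain ⟨b, hb⟩ := ha
  have hbd : b ∈ Ideal.span {d} := by
    apply aux_pow_tf p d htf n
    rw [Ideal.mem_span_singleton]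
    exact ⟨a, hb.symm⟩
  rw [Ideal.mem_span_singleton] at hbd
  obtain ⟨c, hc⟩ := hbd
  refine ⟨c, (mul_cancel_left_mem_nonZeroDivisors hdA).mp ?_⟩
  rw [hb, hc]; ring

lemma aux_dpow_cancel (hdA : d ∈ nonZeroDivisors A)
    (htf : ∀ x : A, (p : A) * x ∈ Ideal.span {d} → x ∈ Ideal.span {d}) :
    ∀ (k n : ℕ) (a : A), d ^ k * a ∈ Ideal.span {(p : A) ^ n} → a ∈ Ideal.span {(p : A) ^ n} := by
  intro k
  induction k with
  | zero => intro n a ha; simpa using ha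
  | succ k ih =>
    intro n a ha
    rw [pow_succ', mul_assoc] at ha
    exact ih n a (aux_d_cancel p d hdA htf n _ ha)

lemma aux_powers_le (hdA : d ∈ nonZeroDivisors A) :
    Submonoid.powers d ≤ nonZeroDivisors A := by
  rintro x ⟨n, rfl⟩
  exact pow_mem hdA n

lemma aux_descend (hdA : d ∈ nonZeroDivisors A)
    (htf : ∀ x : A, (p : A) * x ∈ Ideal.span {d} → x ∈ Ideal.span {d})
    (n : ℕ) (a : A)
    (ha : algebraMap A (Localization.Away d) a ∈
      Ideal.span {(p : Localization.Away d) ^ n}) :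
    a ∈ Ideal.span {(p : A) ^ n} := by
  rw [Ideal.mem_span_singleton] at ha
  obtain ⟨u, hu⟩ := ha
  obtain ⟨⟨b, s⟩, hbs⟩ := IsLocalization.surj (Submonoid.powers d) u
  obtain ⟨k, hk⟩ := s.2
  have hinj : Function.Injective (algebraMap A (Localization.Away d)) :=
    IsLocalization.injective _ (aux_powers_le d hdA)
  have key : a * d ^ k = (p : A) ^ n * b := by
    apply hinj
    dsimp only at hk hbs
    rw [map_mul, map_mul, hk, hu, mul_assoc, hbs, map_pow, map_natCast]
  apply aux_dpow_cancel p d hdA htf k n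
  rw [Ideal.mem_span_singleton]
  exact ⟨b, by rw [mul_comm] at key; exact key⟩

lemma aux_p_nzd_R (hpA : (p : A) ∈ nonZeroDivisors A) :
    (p : Localization.Away d) ∈ nonZeroDivisors (Localization.Away d) := by
  have h := IsLocalization.map_nonZeroDivisors_le (Submonoid.powers d) (Localization.Away d)
  have h2 : algebraMap A (Localization.Away d) (p : A) ∈
      (nonZeroDivisors A).map (algebraMap A (Localization.Away d)) :=
    Submonoid.mem_map_of_mem _ hpA
  simpa using h h2

lemma aux_ideal_eq (n : ℕ) :
    ((Ideal.span {(p : Localization.Away d)}) ^ n • ⊤ : Ideal (Localization.Away d)) =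
      Ideal.span {(p : Localization.Away d) ^ n} := by
  rw [smul_eq_mul, Ideal.mul_top, Ideal.span_singleton_pow]

lemma aux_C_tf (hpA : (p : A) ∈ nonZeroDivisors A)
    (x : PAdicCompletionOfAway A p d)
    (hx : (p : PAdicCompletionOfAway A p d) * x = 0) : x = 0 := by
  set R := Localization.Away d
  set I := Ideal.span {(p : R)}
  apply AdicCompletion.ext
  intro n
  obtain ⟨y, hy⟩ := Submodule.Quotient.mk_surjective _ (x.val (n + 1))
  have hps : (p : PAdicCompletionOfAway A p d) * x = (p : R) • x := by
    rw [Algebra.smul_def, map_natCast]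
  have h1 : (p : R) * y ∈ (I ^ (n + 1) • ⊤ : Ideal R) := by
    have := congrArg (fun z : PAdicCompletionOfAway A p d => z.val (n + 1)) hx
    rw [hps] at this
    simp only [AdicCompletion.val_smul_apply, AdicCompletion.val_zero_apply] at this
    rw [← hy, ← Submodule.Quotient.mk_smul] at this
    rw [← smul_eq_mul]
    exact (Submodule.Quotient.mk_eq_zero _).mp this
  rw [aux_ideal_eq, Ideal.mem_span_singleton] at h1
  obtain ⟨z, hz⟩ := h1
  have hy' : y = (p : R) ^ n * z := by
    have hpn : (p : R) ∈ nonZeroDivisors R := aux_p_nzd_R p d hpA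
    apply (mul_cancel_left_mem_nonZeroDivisors hpn).mp
    rw [hz]; ring
  rw [AdicCompletion.val_zero_apply,
    ← AdicCompletion.transitionMap_comp_eval_apply I R (Nat.le_succ n) x,
    ← hy]
  change Submodule.Quotient.mk (p := (I ^ n • ⊤ : Submodule R R)) y = 0
  rw [Submodule.Quotient.mk_eq_zero,
    aux_ideal_eq, Ideal.mem_span_singleton]
  exact ⟨z, hy'⟩

end helpers

/-!
Let A be a commutative ring, p a prime and d ∈ A.  Assume p and d are
nonzerodivisors on A, A/dA is p-torsion-free, and A is classically p-adically
complete.  Let C := lim_n A[1/d]/pⁿA[1/d] be the p-adic completion of A[1/d].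
Then the natural square formed by A → A[1/p], A → A[1/d] → C, and the induced
maps A[1/p] → C[1/p] and C → C[1/p] is Cartesian: the induced map
A → A[1/p] ×_{C[1/p]} C is bijective; equivalently A[1/p] ∩ (A[1/d])^∧_p = A.
Here g₁ is the (unique) ring homomorphism A[1/p] → C[1/p] compatible with the
maps from A.
-/

theorem transversal_prism_intersection_with_completed_localization
    {A : Type*} [CommRing A] (p : ℕ) (hp : p.Prime) (d : A)
    (hpA : (p : A) ∈ nonZeroDivisors A) (hdA : d ∈ nonZeroDivisors A)
    (htf : ∀ x : A, (p : A) * x ∈ Ideal.span {d} → x ∈ Ideal.span {d})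
    (hcomp : IsAdicComplete (Ideal.span {(p : A)}) A)
    (g₁ : Localization.Away (p : A) →+*
      Localization.Away (p : PAdicCompletionOfAway A p d))
    (hg₁ : g₁.comp (algebraMap A (Localization.Away (p : A))) =
      ((algebraMap (PAdicCompletionOfAway A p d)
          (Localization.Away (p : PAdicCompletionOfAway A p d))).comp
        ((algebraMap (Localization.Away d) (PAdicCompletionOfAway A p d)).comp
          (algebraMap A (Localization.Away d))))) :
    Function.Bijective (fun a : A =>
      (⟨(algebraMap A (Localization.Away (p : A)) a,
          algebraMap (Localization.Away d) (PAdicCompletionOfAway A p d)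
            (algebraMap A (Localization.Away d) a)),
        by exact RingHom.congr_fun hg₁ a⟩ :
        {xc : Localization.Away (p : A) × PAdicCompletionOfAway A p d //
          g₁ xc.1 = algebraMap (PAdicCompletionOfAway A p d)
            (Localization.Away (p : PAdicCompletionOfAway A p d)) xc.2})) := by
  have hPle : Submonoid.powers (p : A) ≤ nonZeroDivisors A := by
    rintro x ⟨n, rfl⟩; exact pow_mem hpA n
  have hinjP : Function.Injective (algebraMap A (Localization.Away (p : A))) :=
    IsLocalization.injective _ hPle
  set R := Localization.Away d with hR
  set C := PAdicCompletionOfAway A p d with hC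
  set I := Ideal.span {(p : R)} with hI
  -- p is a nonzerodivisor of C
  have hpC : (p : C) ∈ nonZeroDivisors C := by
    rw [mem_nonZeroDivisors_iff_right]
    intro z hz
    exact aux_C_tf p d hpA z (by rw [mul_comm]; exact hz)
  have hCle : Submonoid.powers (p : C) ≤ nonZeroDivisors C := by
    rintro x ⟨n, rfl⟩; exact pow_mem hpC n
  have hinjC : Function.Injective
      (algebraMap C (Localization.Away (p : C))) :=
    IsLocalization.injective _ hCle
  set f : A →+* C := (algebraMap R C).comp (algebraMap A R) with hf
  have hval : ∀ (r : R) (m : ℕ), (algebraMap R C r).val m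
      = Submodule.Quotient.mk (p := (I ^ m • ⊤ : Ideal R)) r := fun r m => rfl
  constructor
  · intro a₁ a₂ h
    have := congrArg (fun z => z.1.1) h
    exact hinjP this
  · rintro ⟨⟨x, c⟩, hxc⟩
    dsimp only at hxc
    obtain ⟨⟨a, s⟩, hx⟩ := IsLocalization.surj (Submonoid.powers (p : A)) x
    obtain ⟨n, hn⟩ := s.2
    dsimp only at hn hx
    -- transfer the relation to C
    have hfs : f (↑s) = (p : C) ^ n := by
      rw [← hn, map_pow, map_natCast]
    have hg : ∀ r : A, g₁ (algebraMap A (Localization.Away (p : A)) r)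
        = algebraMap C (Localization.Away (p : C)) (f r) := by
      intro r
      have := RingHom.congr_fun hg₁ r
      simpa only [RingHom.comp_apply] using this
    have hC1 : c * (p : C) ^ n = f a := by
      apply hinjC
      have h1 := congrArg g₁ hx
      rw [map_mul, hg a, hg (↑s : A), hxc, hfs] at h1
      rw [map_mul]
      exact h1
    -- a is divisible by p^n in A
    have haR : algebraMap A R a ∈ Ideal.span {(p : R) ^ n} := by
      have h2 := congrArg (fun z : C => z.val n) hC1
      rw [hf, RingHom.comp_apply, hval] at h2
      have hpn : ((p : C) ^ n) = algebraMap R C ((p : R) ^ n) := by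
        rw [map_pow, map_natCast]
      rw [hpn, AdicCompletion.val_mul, hval] at h2
      have hzero : (Submodule.Quotient.mk (p := (I ^ n • ⊤ : Ideal R)) ((p : R) ^ n))
          = 0 := by
        rw [Submodule.Quotient.mk_eq_zero, aux_ideal_eq]
        exact Ideal.mem_span_singleton_self _
      rw [hzero, mul_zero] at h2
      rw [← aux_ideal_eq p d n, ← Submodule.Quotient.mk_eq_zero]
      exact h2.symm
    have haA : a ∈ Ideal.span {(p : A) ^ n} := aux_descend p d hdA htf n a haR
    rw [Ideal.mem_span_singleton] at haA
    obtain ⟨b, hb⟩ := haA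
    refine ⟨b, Subtype.ext (Prod.ext ?_ ?_)⟩
    · -- first component
      show algebraMap A (Localization.Away (p : A)) b = x
      have hu : IsUnit (algebraMap A (Localization.Away (p : A)) (↑s : A)) :=
        IsLocalization.map_units _ s
      apply hu.mul_right_cancel
      rw [hx, hb, ← hn, map_mul]
      exact mul_comm _ _
    · -- second component
      show f b = c
      apply (mul_cancel_left_mem_nonZeroDivisors (pow_mem hpC n)).mp
      rw [hb, map_mul, map_pow, map_natCast] at hC1
      rw [← hC1]
      exact mul_comm _ _
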